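/- For any ε ∈ (0, 1] and any Borel probability measure μ on ℝ giving full measure to the interval [ε, 1], we have sup_{j ≥ 1} |μ̂(j)| ≥ πε/(8 + 2πε), where the supremum is over positive integers j. In particular sup_{j ≥ 1} |μ̂(j)| ≥ ε/5. -/

import Mathlib

open MeasureTheory Real

lemma cos_sum2 {t : ℝ} (ht : t ∈ Set.Icc (0:ℝ) 1) :
    HasSum (fun n : ℕ => 1 / (n:ℝ)^2 * Real.cos (2 * π * n * t))
      (π^2 * (t^2 - t + 1/6)) := by
  have h := hasSum_one_div_nat_pow_mul_cos (k := 1) one_ne_zero ht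
  have e1 : (Polynomial.map (algebraMap ℚ ℝ) (Polynomial.bernoulli (2*1))).eval t
      = t^2 - t + 1/6 := by
    have : bernoulli 2 = 1/6 := by
      rw [bernoulli]
      norm_num [bernoulli'_two]
    simp [Polynomial.bernoulli, Finset.sum_range_succ, this]
    ring
  rw [e1] at h
  convert h using 2
  have : (Nat.factorial 2 : ℝ) = 2 := by norm_num [Nat.factorial]
  rw [this]; ring

lemma keyHasSum {ε x : ℝ} (hε0 : 0 < ε) (hε1 : ε ≤ 1) (hx : x ∈ Set.Icc ε 1) :
    HasSum (fun n : ℕ => Real.sin (π*n*ε/2)^2 / (π^2*n^2) * Real.cos (2*π*n*(x - ε/2)))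
      (-(ε^2)/8) := by
  obtain ⟨hx1, hx2⟩ := hx
  have h1 : x - ε/2 ∈ Set.Icc (0:ℝ) 1 := ⟨by linarith, by linarith⟩
  have h2 : x ∈ Set.Icc (0:ℝ) 1 := ⟨by linarith, by linarith⟩
  have h3 : x - ε ∈ Set.Icc (0:ℝ) 1 := ⟨by linarith, by linarith⟩
  have H := (((cos_sum2 h1).sub ((cos_sum2 h2).div_const 2)).sub
    ((cos_sum2 h3).div_const 2)).mul_left (1/(2*π^2))
  have hval : (1/(2*π^2)) * (π^2*((x-ε/2)^2 - (x-ε/2) + 1/6)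
      - π^2*(x^2 - x + 1/6)/2 - π^2*((x-ε)^2 - (x-ε) + 1/6)/2) = -(ε^2)/8 := by
    field_simp
    ring
  rw [hval] at H
  refine H.congr_fun fun n => ?_
  rcases eq_or_ne n 0 with rfl | hn
  · simp
  · have hn' : (n:ℝ) ≠ 0 := Nat.cast_ne_zero.mpr hn
    have hs : Real.sin (π*n*ε/2)^2 = 1/2 - Real.cos (π*n*ε)/2 := by
      rw [Real.sin_sq_eq_half_sub, show 2*(π*n*ε/2) = π*n*ε by ring]
    have e2 : Real.cos (2*π*n*x) = Real.cos (2*π*n*(x-ε/2) + π*n*ε) := by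
      rw [show 2*π*(n:ℝ)*(x-ε/2) + π*n*ε = 2*π*n*x by ring]
    have e3 : Real.cos (2*π*n*(x-ε)) = Real.cos (2*π*n*(x-ε/2) - π*n*ε) := by
      rw [show 2*π*(n:ℝ)*(x-ε/2) - π*n*ε = 2*π*n*(x-ε) by ring]
    rw [e2, e3, Real.cos_add, Real.cos_sub, hs]
    field_simp
    ring

lemma cHasSum {ε : ℝ} (hε0 : 0 < ε) (hε1 : ε ≤ 1) :
    HasSum (fun n : ℕ => Real.sin (π*n*ε/2)^2 / (π^2*n^2)) (ε*(2-ε)/8) := by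
  have h1 : (0:ℝ) ∈ Set.Icc (0:ℝ) 1 := ⟨le_refl _, zero_le_one⟩
  have h2 : ε/2 ∈ Set.Icc (0:ℝ) 1 := ⟨by linarith, by linarith⟩
  have H := ((cos_sum2 h1).sub (cos_sum2 h2)).mul_left (1/(2*π^2))
  have hval : (1/(2*π^2)) * (π^2*((0:ℝ)^2 - 0 + 1/6) - π^2*((ε/2)^2 - ε/2 + 1/6))
      = ε*(2-ε)/8 := by
    field_simp
    ring
  rw [hval] at H
  refine H.congr_fun fun n => ?_
  rcases eq_or_ne n 0 with rfl | hn
  · simp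
  · have hn' : (n:ℝ) ≠ 0 := Nat.cast_ne_zero.mpr hn
    have hs : Real.sin (π*n*ε/2)^2 = 1/2 - Real.cos (π*n*ε)/2 := by
      rw [Real.sin_sq_eq_half_sub, show 2*(π*n*ε/2) = π*n*ε by ring]
    have e2 : Real.cos (2*π*n*(ε/2)) = Real.cos (π*n*ε) := by
      rw [show 2*π*(n:ℝ)*(ε/2) = π*n*ε by ring]
    rw [e2, hs]
    simp only [mul_zero, Real.cos_zero]
    field_simp

noncomputable def FT1 (μ : Measure ℝ) (ξ : ℝ) : ℂ :=
  ∫ x, Complex.exp (-(2 * Real.pi * Complex.I * (ξ * x : ℝ))) ∂μ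

lemma FT1_norm_le_one (μ : Measure ℝ) [IsProbabilityMeasure μ] (ξ : ℝ) :
    ‖FT1 μ ξ‖ ≤ 1 := by
  have h : ∀ᵐ x ∂μ, ‖Complex.exp (-(2 * Real.pi * Complex.I * (ξ * x : ℝ)))‖ ≤ 1 := by
    filter_upwards with x
    rw [Complex.norm_exp]
    simp
  calc ‖FT1 μ ξ‖ ≤ 1 * (μ Set.univ).toReal := norm_integral_le_of_norm_le_const h
  _ = 1 := by simp

lemma exp_integrable (μ : Measure ℝ) [IsProbabilityMeasure μ] (ξ : ℝ) :
    Integrable (fun x : ℝ => Complex.exp (-(2 * Real.pi * Complex.I * (ξ * x : ℝ)))) μ := by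
  apply Integrable.mono' (integrable_const (1:ℝ))
  · apply Continuous.aestronglyMeasurable
    fun_prop
  · filter_upwards with x
    rw [Complex.norm_exp]
    simp

lemma cos_integrable (μ : Measure ℝ) [IsProbabilityMeasure μ] (a b : ℝ) :
    Integrable (fun x : ℝ => Real.cos (a * (x - b))) μ := by
  apply Integrable.mono' (integrable_const (1:ℝ))
  · apply Continuous.aestronglyMeasurable
    fun_prop
  · filter_upwards with x
    rw [Real.norm_eq_abs]
    exact Real.abs_cos_le_one _

lemma I_le (μ : Measure ℝ) [IsProbabilityMeasure μ] (ε : ℝ) (n : ℕ) (hn : n ≠ 0) :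
    |∫ x, Real.cos (2*π*n*(x - ε/2)) ∂μ| ≤ ‖FT1 μ (n:ℝ)‖ := by
  set c : ℂ := Complex.exp ((π*n*ε : ℝ) * Complex.I) with hc
  have habs : ‖c‖ = 1 := Complex.norm_exp_ofReal_mul_I _
  have hprod : ∀ x : ℝ, c * Complex.exp (-(2 * Real.pi * Complex.I * ((n:ℝ) * x : ℝ)))
      = Complex.exp ((π*n*ε - 2*π*n*x : ℝ) * Complex.I) := by
    intro x
    rw [← Complex.exp_add]
    congr 1
    push_cast
    ring
  have hint : (c * FT1 μ (n:ℝ)).re = ∫ x, Real.cos (2*π*n*(x - ε/2)) ∂μ := by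
    rw [FT1, ← integral_const_mul, ← RCLike.re_to_complex,
      ← integral_re ((exp_integrable μ (n:ℝ)).const_mul c)]
    apply integral_congr_ae
    filter_upwards with x
    rw [RCLike.re_to_complex, hprod x]
    have : (Complex.exp ((π*n*ε - 2*π*n*x : ℝ) * Complex.I)).re
        = Real.cos (π*n*ε - 2*π*n*x) := by
      rw [Complex.exp_ofReal_mul_I_re]
    rw [this, show π*(n:ℝ)*ε - 2*π*n*x = -(2*π*n*(x - ε/2)) by ring, Real.cos_neg]
  rw [← hint]
  calc |(c * FT1 μ (n:ℝ)).re| ≤ ‖c * FT1 μ (n:ℝ)‖ := Complex.abs_re_le_norm _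
  _ = ‖FT1 μ (n:ℝ)‖ := by rw [norm_mul, habs, one_mul]

set_option maxHeartbeats 1000000 in
theorem stmt1 (ε : ℝ) (hε0 : 0 < ε) (hε1 : ε ≤ 1)
    (μ : Measure ℝ) [IsProbabilityMeasure μ] (hμ : μ (Set.Icc ε 1) = 1) :
    Real.pi * ε / (8 + 2 * Real.pi * ε) ≤ ⨆ j : ℕ+, ‖FT1 μ (j : ℝ)‖ ∧
    ε / 5 ≤ ⨆ j : ℕ+, ‖FT1 μ (j : ℝ)‖ := by
  set M := ⨆ j : ℕ+, ‖FT1 μ (j : ℝ)‖ with hMdef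
  have hbdd : BddAbove (Set.range fun j : ℕ+ => ‖FT1 μ (j : ℝ)‖) := by
    refine ⟨1, ?_⟩
    rintro y ⟨j, rfl⟩
    exact FT1_norm_le_one μ _
  have hM0 : 0 ≤ M := le_trans (norm_nonneg _) (le_ciSup hbdd 1)
  set c : ℕ → ℝ := fun n => Real.sin (π*n*ε/2)^2 / (π^2*n^2) with hcdef
  set I : ℕ → ℝ := fun n => ∫ x, Real.cos (2*π*n*(x - ε/2)) ∂μ with hIdef
  have hc : ∀ n, 0 ≤ c n := fun n => by positivity
  set F : ℕ → ℝ → ℝ := fun n x => c n * Real.cos (2*π*n*(x - ε/2)) with hFdef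
  have hFint : ∀ n, Integrable (F n) μ := fun n => (cos_integrable μ _ _).const_mul _
  have hnorm : ∀ n, ∫ x, ‖F n x‖ ∂μ ≤ c n := by
    intro n
    have hb : ∀ x : ℝ, ‖F n x‖ ≤ c n := by
      intro x
      rw [hFdef]
      simp only [Real.norm_eq_abs, abs_mul, abs_of_nonneg (hc n)]
      exact mul_le_of_le_one_right (hc n) (Real.abs_cos_le_one _)
    calc ∫ x, ‖F n x‖ ∂μ ≤ ∫ _x, c n ∂μ :=
          integral_mono (hFint n).norm (integrable_const _) hb
      _ = c n := by simp
  have hsummable : Summable (fun n => ∫ x, ‖F n x‖ ∂μ) :=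
    Summable.of_nonneg_of_le (fun n => integral_nonneg fun x => norm_nonneg _)
      hnorm (cHasSum hε0 hε1).summable
  have hswap := hasSum_integral_of_summable_integral_norm hFint hsummable
  have hae : ∀ᵐ x ∂μ, x ∈ Set.Icc ε 1 := by
    rw [ae_iff]
    have hcompl : μ (Set.Icc ε 1)ᶜ = 0 := by
      rw [measure_compl measurableSet_Icc (measure_ne_top μ _), hμ, measure_univ]
      simp
    exact hcompl
  have hval : ∫ x, (∑' n, F n x) ∂μ = -(ε^2)/8 := by
    rw [integral_congr_ae (g := fun _ => -(ε^2)/8)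
      (by filter_upwards [hae] with x hx; exact (keyHasSum hε0 hε1 hx).tsum_eq)]
    simp
  rw [hval] at hswap
  have hInt_eq : (fun n => ∫ x, F n x ∂μ) = fun n => c n * I n := by
    funext n
    rw [hFdef, hIdef]
    exact integral_const_mul _ _
  rw [hInt_eq] at hswap
  have htsum : ∑' n, c n * I n = -(ε^2)/8 := hswap.tsum_eq
  have hterm : ∀ n, |c n * I n| ≤ c n * M := by
    intro n
    rw [abs_mul, abs_of_nonneg (hc n)]
    rcases eq_or_ne n 0 with rfl | hn
    · have hc0 : c 0 = 0 := by simp [hcdef]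
      simp [hc0]
    · refine mul_le_mul_of_nonneg_left ?_ (hc n)
      refine (I_le μ ε n hn).trans ?_
      have : (((⟨n, Nat.pos_of_ne_zero hn⟩ : ℕ+) : ℕ) : ℝ) = (n : ℝ) := rfl
      exact this ▸ le_ciSup hbdd ⟨n, Nat.pos_of_ne_zero hn⟩
  have hsumcM : Summable (fun n => c n * M) := (cHasSum hε0 hε1).summable.mul_right M
  have hsumabs : Summable (fun n => |c n * I n|) :=
    Summable.of_nonneg_of_le (fun n => abs_nonneg _) hterm hsumcM
  have hkey : ε^2/8 ≤ ε*(2-ε)/8 * M := by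
    have h1 : |∑' n, c n * I n| = ε^2/8 := by
      rw [htsum]
      rw [abs_of_nonpos (by nlinarith [sq_nonneg ε] : -(ε^2)/8 ≤ 0)]
      ring
    have hsumnorm : Summable (fun n => ‖c n * I n‖) := by
      simpa only [Real.norm_eq_abs] using hsumabs
    have h2' : ‖∑' n, c n * I n‖ ≤ ∑' n, ‖c n * I n‖ := norm_tsum_le_tsum_norm hsumnorm
    have h2 : |∑' n, c n * I n| ≤ ∑' n, |c n * I n| := by
      simpa only [Real.norm_eq_abs] using h2'
    have h3 : ∑' n, |c n * I n| ≤ ∑' n, c n * M := Summable.tsum_le_tsum hterm hsumabs hsumcM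
    have h4 : ∑' n, c n * M = ε*(2-ε)/8 * M := by
      rw [tsum_mul_right, (cHasSum hε0 hε1).tsum_eq]
    linarith [h1 ▸ (h2.trans (h3.trans_eq h4))]
  have h2M : ε ≤ 2 * M := by nlinarith
  constructor
  · rw [div_le_iff₀ (by nlinarith [Real.pi_pos] : (0:ℝ) < 8 + 2*π*ε)]
    nlinarith [Real.pi_le_four, Real.pi_pos, mul_nonneg (mul_nonneg Real.pi_pos.le hε0.le) hM0]
  · linarith
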